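/- Let m and ℓ̃ be integers with m ≥ 1 and 0 ≤ ℓ̃ ≤ m. Then the polar coefficient c_m^F(−1, ℓ̃) defined by the SL(2,ℤ) continued-fraction sum equals Σ_{r≥1} (2r + ℓ̃)·d(m − r² − rℓ̃) (a finite sum, since d vanishes below −1; explicitly the sum runs over 1 ≤ r ≤ ⌊(−ℓ̃ + √(ℓ̃² + 4m + 4))/2⌋). -/

import Mathlib

/-- `d n`: the coefficient of `q^(n+1)` in `∏ (1 - q^j)^{-24}`, i.e. the number of
24-tuples of integer partitions whose sizes sum to `n+1` (and `0` for `n < -1`). -/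
def dcoef (n : ℤ) : ℤ :=
  if 0 ≤ n + 1 then
    ∑ v ∈ Finset.Nat.antidiagonalTuple 24 (n + 1).toNat,
      ∏ i, (Fintype.card (Nat.Partition (v i)) : ℤ)
  else 0

/-- The polar coefficient `c_m^F(ñ, ℓ̃)`, given by the `SL(2,ℤ)` continued-fraction sum
over quadruples `(p, q, r, s)` with `ps - qr = 1`, `r, s > 0` and
`0 ≤ ℓ̃/(2m) - q/s < 1/(rs)`; only finitely many terms are nonzero. -/
noncomputable def polarCoef (m nt ℓt : ℤ) : ℤ :=
  ∑ᶠ (p : ℤ) (q : ℤ) (r : ℤ) (s : ℤ),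
    if p * s - q * r = 1 ∧ 0 < r ∧ 0 < s ∧
        0 ≤ (ℓt : ℚ) / (2 * m) - (q : ℚ) / s ∧
        (ℓt : ℚ) / (2 * m) - (q : ℚ) / s < 1 / ((r : ℚ) * s) then
      (-2 * r * s * nt - 2 * p * q * m + (p * s + q * r) * ℓt) *
        dcoef (r ^ 2 * nt + p ^ 2 * m - p * r * ℓt) *
        dcoef (s ^ 2 * nt + q ^ 2 * m - q * s * ℓt)
    else 0

lemma dcoef_neg_one : dcoef (-1) = 1 := by
  simp [dcoef, Finset.Nat.antidiagonalTuple_zero_right]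

lemma dcoef_eq_zero {n : ℤ} (h : n ≤ -2) : dcoef n = 0 := by
  rw [dcoef, if_neg]; omega

lemma key (m ℓt : ℤ) (hm : 1 ≤ m) (hℓ0 : 0 ≤ ℓt) (p q r s : ℤ) :
    (if p * s - q * r = 1 ∧ 0 < r ∧ 0 < s ∧
        0 ≤ (ℓt : ℚ) / (2 * m) - (q : ℚ) / s ∧
        (ℓt : ℚ) / (2 * m) - (q : ℚ) / s < 1 / ((r : ℚ) * s) then
      (-2 * r * s * (-1 : ℤ) - 2 * p * q * m + (p * s + q * r) * ℓt) *
        dcoef (r ^ 2 * (-1) + p ^ 2 * m - p * r * ℓt) *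
        dcoef (s ^ 2 * (-1) + q ^ 2 * m - q * s * ℓt)
    else 0) =
    if p = 1 ∧ q = 0 ∧ s = 1 then
      (if 1 ≤ r then (2 * r + ℓt) * dcoef (m - r ^ 2 - r * ℓt) else 0)
    else 0 := by
  have hm' : (0:ℚ) < 2 * (m:ℚ) := by positivity
  by_cases hC : p * s - q * r = 1 ∧ 0 < r ∧ 0 < s ∧
      0 ≤ (ℓt : ℚ) / (2 * m) - (q : ℚ) / s ∧
      (ℓt : ℚ) / (2 * m) - (q : ℚ) / s < 1 / ((r : ℚ) * s)
  · obtain ⟨h1, hr, hs, h4, h5⟩ := hC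
    have hs' : (0:ℚ) < (s:ℚ) := by exact_mod_cast hs
    have hr' : (0:ℚ) < (r:ℚ) := by exact_mod_cast hr
    have hB : q * (2 * m) ≤ ℓt * s := by
      have : (q:ℚ) / s ≤ (ℓt:ℚ) / (2 * m) := by linarith
      rw [div_le_div_iff₀ hs' hm'] at this
      exact_mod_cast this
    have hA : (ℓt * s - 2 * m * q) * r < 2 * m := by
      have e : (ℓt : ℚ) / (2 * m) - (q : ℚ) / s
          = ((ℓt : ℚ) * s - 2 * m * q) / ((2 * m) * s) := by
        field_simp
      rw [e, div_lt_div_iff₀ (by positivity) (by positivity)] at h5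
      have h6 : (((ℓt:ℚ) * s - 2 * m * q) * r) * s < (2 * (m:ℚ)) * s := by
        linear_combination h5
      have := (mul_lt_mul_iff_left₀ hs').mp h6
      exact_mod_cast this
    rw [if_pos ⟨h1, hr, hs, h4, h5⟩]
    rcases lt_trichotomy q 0 with hq | hq | hq
    · exfalso; nlinarith
    · subst hq
      have hps : p * s = 1 := by linarith
      obtain ⟨hp, hs1⟩ : p = 1 ∧ s = 1 := by
        rcases Int.mul_eq_one_iff_eq_one_or_neg_one.mp hps with ⟨h, h'⟩ | ⟨h, h'⟩
        · exact ⟨h, h'⟩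
        · omega
      subst hp; subst hs1
      rw [if_pos ⟨rfl, rfl, rfl⟩, if_pos (show (1:ℤ) ≤ r by omega),
        show ((1:ℤ) ^ 2 * (-1) + (0:ℤ) ^ 2 * m - 0 * 1 * ℓt) = -1 by ring,
        dcoef_neg_one,
        show (r ^ 2 * (-1) + 1 ^ 2 * m - 1 * r * ℓt) = m - r ^ 2 - r * ℓt by ring]
      ring
    · have : s ^ 2 * (-1) + q ^ 2 * m - q * s * ℓt ≤ -2 := by nlinarith
      rw [dcoef_eq_zero this, mul_zero, if_neg (by omega : ¬(p = 1 ∧ q = 0 ∧ s = 1))]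
  · rw [if_neg hC]
    by_cases h : p = 1 ∧ q = 0 ∧ s = 1
    · obtain ⟨hp, hq, hs1⟩ := h; subst hp; subst hq; subst hs1
      rw [if_pos ⟨rfl, rfl, rfl⟩]
      by_cases hr : 1 ≤ r
      · rw [if_pos hr]
        have hr' : (0:ℚ) < (r:ℚ) := by exact_mod_cast hr
        have hnlt : ¬ ((ℓt : ℚ) / (2 * m) - ((0:ℤ) : ℚ) / ((1:ℤ):ℚ) < 1 / ((r : ℚ) * ((1:ℤ):ℚ))) := by
          intro hlt
          exact hC ⟨by ring, by omega, by omega, by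
            push_cast
            rw [zero_div, sub_zero]
            positivity, hlt⟩
        push_cast at hnlt
        rw [zero_div, sub_zero, mul_one, not_lt, div_le_div_iff₀ hr' hm'] at hnlt
        have h2m : 2 * m ≤ ℓt * r := by
          exact_mod_cast (by linarith : 2 * (m:ℚ) ≤ (ℓt:ℚ) * r)
        have : m - r ^ 2 - r * ℓt ≤ -2 := by nlinarith
        rw [dcoef_eq_zero this, mul_zero]
      · rw [if_neg hr]
    · rw [if_neg h]

theorem stmt13 (m ℓt : ℤ) (hm : 1 ≤ m) (hℓ0 : 0 ≤ ℓt) (hℓm : ℓt ≤ m) :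
    polarCoef m (-1) ℓt =
      ∑ᶠ r : ℤ, if 1 ≤ r then (2 * r + ℓt) * dcoef (m - r ^ 2 - r * ℓt) else 0 := by
  set G : ℤ → ℤ := fun r => if 1 ≤ r then (2 * r + ℓt) * dcoef (m - r ^ 2 - r * ℓt) else 0
    with hG
  have h1 : polarCoef m (-1) ℓt =
      ∑ᶠ (p : ℤ) (q : ℤ) (r : ℤ) (s : ℤ),
        (if p = 1 ∧ q = 0 ∧ s = 1 then G r else 0) := by
    unfold polarCoef
    exact finsum_congr fun p => finsum_congr fun q => finsum_congr fun r =>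
      finsum_congr fun s => key m ℓt hm hℓ0 p q r s
  rw [h1]
  rw [finsum_eq_single _ (1:ℤ) (fun p hp => by simp [hp])]
  rw [finsum_eq_single _ (0:ℤ) (fun q hq => by simp [hq])]
  refine finsum_congr fun r => ?_
  rw [finsum_eq_single _ (1:ℤ) (fun s hs => by simp [hs])]
  simp
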